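/- Let κ > 0 be a constant and define A(ξ',λ) = (|ξ'|² + κ⁻¹(λ+1))^{1/2} for ξ' ∈ ℝ^{n−1}\{0} and λ = λ₁ + iλ₂ ∈ ℂ with λ₁ ≥ 0, λ₂ ≠ 0. Then for every s ∈ ℝ and every multi-index α' ≥ 0 in ℤ^{n−1} there are constants C = C(κ,s,α') > 0 and d = d(κ) > 0 such that, for all such (ξ',λ) and all x_n ≥ 0: (i) |∂^{α'}_{ξ'} A(ξ',λ)^s| ≤ C (|ξ'| + |λ|^{1/2} + 1)^{s−|α'|}; (ii) |∂^{α'}_{ξ'} |ξ'|^s| ≤ C(s,α') |ξ'|^{s−|α'|}; (iii) |∂^{α'}_{ξ'} e^{−A(ξ',λ) x_n}| ≤ C (|ξ'| + |λ|^{1/2} + 1)^{−|α'|} e^{−d(|ξ'| + |λ|^{1/2} + 1) x_n}. -/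

import Mathlib

open MeasureTheory Set Filter
open scoped ENNReal Topology

noncomputable section

abbrev Euc (n : ℕ) := EuclideanSpace ℝ (Fin n)

variable {n : ℕ} {F : Type*} [NormedAddCommGroup F] [NormedSpace ℝ F]

/-- Partial derivative in the `i`-th coordinate direction. -/
def pd (i : Fin n) (u : Euc n → F) (x : Euc n) : F :=
  fderiv ℝ u x (EuclideanSpace.single i (1 : ℝ))

/-- `div (κ ∇ u)`, computed in coordinates as `∑ i ∂_i (κ ∂_i u)`. -/
def divKGrad (κ : Euc n → ℝ) (u : Euc n → F) (x : Euc n) : F :=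
  ∑ i, pd i (fun y => κ y • pd i u y) x

/-- Directional derivative `∂_ν u` along a vector field `ν`. -/
def normalD (ν : Euc n → Euc n) (u : Euc n → F) (x : Euc n) : F :=
  ∑ i, ν x i • pd i u x

/-- Time derivative `∂_t u`. -/
def timeDeriv (u : ℝ → Euc n → F) : ℝ → Euc n → F :=
  fun t x => deriv (fun s => u s x) t

/-- The `L_p(G)` norm (`p` a real exponent). -/
def lpNormOn (G : Set (Euc n)) (p : ℝ) (f : Euc n → F) : ℝ :=
  (eLpNorm f (ENNReal.ofReal p) (volume.restrict G)).toReal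

/-- Membership in `L_p(G)`. -/
def MemLpOn (G : Set (Euc n)) (p : ℝ) (f : Euc n → F) : Prop :=
  MemLp f (ENNReal.ofReal p) (volume.restrict G)

/-- The Sobolev `W^k_p(G)` norm, via iterated (total) derivatives. -/
def sobolevNorm (k : ℕ) (p : ℝ) (G : Set (Euc n)) (f : Euc n → F) : ℝ :=
  ∑ i ∈ Finset.range (k + 1), lpNormOn G p (fun x => (‖iteratedFDeriv ℝ i f x‖ : ℝ))

/-- Membership in the Sobolev space `W^k_p(G)`. -/
def MemSobolev (k : ℕ) (p : ℝ) (G : Set (Euc n)) (f : Euc n → F) : Prop :=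
  ∀ i ≤ k, MemLpOn G p (fun x => (‖iteratedFDeriv ℝ i f x‖ : ℝ))

/-- The `L_q(I)` norm of a scalar function of time. -/
def lqNormOn (I : Set ℝ) (q : ℝ) (φ : ℝ → ℝ) : ℝ :=
  (eLpNorm φ (ENNReal.ofReal q) (volume.restrict I)).toReal

/-- Membership in `L_q(I)` for a scalar function of time. -/
def MemLqOn (I : Set ℝ) (q : ℝ) (φ : ℝ → ℝ) : Prop :=
  MemLp φ (ENNReal.ofReal q) (volume.restrict I)

/-- The `L_q(I; W^k_p(G))` norm. -/
def lqSobNorm (I : Set ℝ) (q : ℝ) (k : ℕ) (p : ℝ) (G : Set (Euc n))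
    (u : ℝ → Euc n → F) : ℝ :=
  lqNormOn I q (fun t => sobolevNorm k p G (u t))

/-- The anisotropic Sobolev norm `‖u‖_{W^{2,1}_{p,q}(G×I)}`. -/
def anisoNorm (p q : ℝ) (G : Set (Euc n)) (I : Set ℝ) (u : ℝ → Euc n → F) : ℝ :=
  lqSobNorm I q 2 p G u + lqSobNorm I q 0 p G u + lqSobNorm I q 0 p G (timeDeriv u)

/-- Membership in the anisotropic Sobolev space `W^{2,1}_{p,q}(G×I)`. -/
def MemAniso (p q : ℝ) (G : Set (Euc n)) (I : Set ℝ) (u : ℝ → Euc n → F) : Prop :=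
  MemLqOn I q (fun t => sobolevNorm 2 p G (u t)) ∧
  MemLqOn I q (fun t => sobolevNorm 0 p G (u t)) ∧
  MemLqOn I q (fun t => sobolevNorm 0 p G (timeDeriv u t)) ∧
  (∀ᵐ t ∂(volume.restrict I), MemSobolev 2 p G (u t)) ∧
  (∀ᵐ t ∂(volume.restrict I), ∀ᵐ x ∂(volume : Measure (Euc n)),
    DifferentiableAt ℝ (fun s => u s x) t)

/-- Membership in `W^{2,1}_{p,q,0}(G×ℝ₊)`:
anisotropic regularity on all of `ℝ` together with vanishing for `t < 0`. -/
def MemAnisoZero (p q : ℝ) (G : Set (Euc n)) (u : ℝ → Euc n → ℝ) : Prop :=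
  MemAniso p q G univ u ∧ ∀ t < (0 : ℝ), ∀ x, u t x = 0

/-- One-dimensional Fourier transform (for complex-valued functions of time). -/
def ft1 (v : ℝ → ℂ) (ξ : ℝ) : ℂ :=
  ∫ t : ℝ, Complex.exp (-(2 * Real.pi * Complex.I) * (t : ℂ) * (ξ : ℂ)) * v t

/-- One-dimensional inverse Fourier transform. -/
def ift1 (v : ℝ → ℂ) (t : ℝ) : ℂ :=
  ∫ ξ : ℝ, Complex.exp ((2 * Real.pi * Complex.I) * (t : ℂ) * (ξ : ℂ)) * v ξ

/-- The Bessel-potential operator `⟨d_t⟩^s`, applied pointwise in the space variable: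
`⟨d_t⟩^s u = F⁻¹[(1+λ₂²)^{s/2} F u]`. -/
def besselDerivFn (s : ℝ) (u : ℝ → Euc n → ℝ) : ℝ → Euc n → ℝ :=
  fun t x =>
    (ift1 (fun ξ => ((((1 + ξ ^ 2) ^ (s / 2) : ℝ)) : ℂ) *
      ft1 (fun τ => ((u τ x : ℝ) : ℂ)) ξ) t).re

/-- The norm of `H^{1,1/2}_{p,q}(G×ℝ) = L_q(ℝ;W¹_p(G)) ∩ H^{1/2}_q(ℝ;L_p(G))`. -/
def hOneHalfNorm (p q : ℝ) (G : Set (Euc n)) (g : ℝ → Euc n → ℝ) : ℝ :=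
  lqSobNorm univ q 1 p G g + lqSobNorm univ q 0 p G (besselDerivFn (1 / 2) g)

/-- Membership in `H^{1,1/2}_{p,q}(G×ℝ)`. -/
def MemHOneHalf (p q : ℝ) (G : Set (Euc n)) (g : ℝ → Euc n → ℝ) : Prop :=
  MemLqOn univ q (fun t => sobolevNorm 1 p G (g t)) ∧
  MemLqOn univ q (fun t => sobolevNorm 0 p G (besselDerivFn (1 / 2) g t)) ∧
  (∀ᵐ t ∂(volume : Measure ℝ), MemSobolev 1 p G (g t))

/-- Membership in `H^{1,1/2}_{p,q,0}(G×ℝ₊)` (vanishing for `t<0`). -/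
def MemHOneHalfZero (p q : ℝ) (G : Set (Euc n)) (g : ℝ → Euc n → ℝ) : Prop :=
  MemHOneHalf p q G g ∧ ∀ t < (0 : ℝ), ∀ x, g t x = 0

/-- Membership in `H^{1,1/2}_{p,q,0}(G×(0,T))`: restriction of a member of the
`0`-space on `G×ℝ₊`. -/
def MemHOneHalfZeroOn (p q T : ℝ) (G : Set (Euc n)) (g : ℝ → Euc n → ℝ) : Prop :=
  ∃ g' : ℝ → Euc n → ℝ, MemHOneHalfZero p q G g' ∧ ∀ t ∈ Ioo (0 : ℝ) T, ∀ x, g' t x = g t x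

/-- The (infimum) norm of `H^{1,1/2}_{p,q,0}(G×(0,T))`. -/
def hRestrNorm (p q T : ℝ) (G : Set (Euc n)) (g : ℝ → Euc n → ℝ) : ℝ :=
  sInf {c : ℝ | ∃ g' : ℝ → Euc n → ℝ, MemHOneHalfZero p q G g' ∧
    (∀ t ∈ Ioo (0 : ℝ) T, ∀ x, g' t x = g t x) ∧ c = hOneHalfNorm p q G g'}

/-- `Ω` has a `C^k` boundary: locally, `Ω` is the sublevel set of a `C^k`
function with nonvanishing differential. -/
def HasCkBoundary (k : ℕ) (Ω : Set (Euc n)) : Prop :=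
  ∀ x ∈ frontier Ω, ∃ r : ℝ, 0 < r ∧ ∃ φ : Euc n → ℝ,
    ContDiffOn ℝ k φ (Metric.ball x r) ∧
    (∀ y ∈ Metric.ball x r, fderiv ℝ φ y ≠ 0) ∧
    Ω ∩ Metric.ball x r = {y ∈ Metric.ball x r | φ y < 0}

/-- `Ω` has a `C^{1,1}` boundary. -/
def HasC11Boundary (Ω : Set (Euc n)) : Prop :=
  ∀ x ∈ frontier Ω, ∃ r : ℝ, 0 < r ∧ ∃ φ : Euc n → ℝ, ∃ L : NNReal,
    ContDiffOn ℝ 1 φ (Metric.ball x r) ∧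
    LipschitzOnWith L (fun y => fderiv ℝ φ y) (Metric.ball x r) ∧
    (∀ y ∈ Metric.ball x r, fderiv ℝ φ y ≠ 0) ∧
    Ω ∩ Metric.ball x r = {y ∈ Metric.ball x r | φ y < 0}

/-- `ν` is the outward unit normal vector field on `∂Ω`. -/
def IsOutwardUnitNormal (Ω : Set (Euc n)) (ν : Euc n → Euc n) : Prop :=
  ∀ x ∈ frontier Ω, ‖ν x‖ = 1 ∧
    ∀ᶠ s in nhdsWithin (0 : ℝ) (Ioi 0), x - s • ν x ∈ Ω ∧ x + s • ν x ∉ closure Ω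

/-- The Robin boundary condition `κ ∂_ν w + κ_s w = g` on `∂Ω`. -/
def RobinBC (Ω : Set (Euc n)) (ν : Euc n → Euc n) (κ κs : Euc n → ℝ)
    (w g : Euc n → ℝ) : Prop :=
  ∀ x ∈ frontier Ω, κ x * normalD ν w x + κs x * w x = g x

/-- Membership in `D(A_p)`, the domain of the Robin realization of `-div(κ∇·)`. -/
def MemDom (Ω : Set (Euc n)) (ν : Euc n → Euc n) (κ κs : Euc n → ℝ) (p : ℝ)
    (w : Euc n → ℝ) : Prop :=
  MemSobolev 2 p Ω w ∧ RobinBC Ω ν κ κs w 0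

/-- The norm `‖A_p w‖_{L_p(Ω)} = ‖div(κ∇w)‖_{L_p(Ω)}` on `X¹_p(Ω) = D(A_p)`. -/
def domNorm (Ω : Set (Euc n)) (κ : Euc n → ℝ) (p : ℝ) (w : Euc n → ℝ) : ℝ :=
  lpNormOn Ω p (fun x => divKGrad κ w x)

/-- The K-functional of the couple `(L_p(Ω), X¹_p(Ω))`. -/
def KX (Ω : Set (Euc n)) (ν : Euc n → Euc n) (κ κs : Euc n → ℝ) (p : ℝ)
    (t : ℝ) (u : Euc n → ℝ) : ℝ :=
  sInf {c : ℝ | ∃ u0 u1 : Euc n → ℝ, (∀ x, u x = u0 x + u1 x) ∧ MemLpOn Ω p u0 ∧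
    MemDom Ω ν κ κs p u1 ∧ c = lpNormOn Ω p u0 + t * domNorm Ω κ p u1}

/-- The norm of the real interpolation space
`X_{p,q}(Ω) = (L_p(Ω), X¹_p(Ω))_{1-1/q,q}`. -/
def xNorm (Ω : Set (Euc n)) (ν : Euc n → Euc n) (κ κs : Euc n → ℝ) (p q : ℝ)
    (u : Euc n → ℝ) : ℝ :=
  (∫ t in Ioi (0 : ℝ), (t ^ (-(1 - 1 / q)) * KX Ω ν κ κs p t u) ^ q / t) ^ (1 / q)

/-- Membership in `X_{p,q}(Ω) = (L_p(Ω), X¹_p(Ω))_{1-1/q,q}`. -/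
def MemX (Ω : Set (Euc n)) (ν : Euc n → Euc n) (κ κs : Euc n → ℝ) (p q : ℝ)
    (u : Euc n → ℝ) : Prop :=
  MemLpOn Ω p u ∧
  IntegrableOn (fun t => (t ^ (-(1 - 1 / q)) * KX Ω ν κ κs p t u) ^ q / t) (Ioi 0)

/-- `u` solves the initial-boundary value problem (1.1):
`∂_t u - div(κ∇u) = f` in `Ω×I`, `u|_{t=0} = u₀`, `κ∂_ν u + κ_s u = g` on `∂Ω×I`. -/
def SolvesHeat (Ω : Set (Euc n)) (ν : Euc n → Euc n) (κ κs : Euc n → ℝ)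
    (I : Set ℝ) (f g : ℝ → Euc n → ℝ) (u₀ : Euc n → ℝ) (u : ℝ → Euc n → ℝ) : Prop :=
  (∀ᵐ t ∂(volume.restrict I), ∀ᵐ x ∂(volume.restrict Ω),
      timeDeriv u t x - divKGrad κ (u t) x = f t x) ∧
  (∀ x ∈ Ω, u 0 x = u₀ x) ∧
  (∀ᵐ t ∂(volume.restrict I), ∀ x ∈ frontier Ω,
      κ x * normalD ν (u t) x + κs x * u t x = g t x)

/-- `u` solves the semilinear problem (1.2):
`∂_t u - div(κ∇u) - |u|^{r-1}u = f` in `Ω×I`, with the same initial and boundary data. -/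
def SolvesSemiHeat (Ω : Set (Euc n)) (ν : Euc n → Euc n) (κ κs : Euc n → ℝ)
    (I : Set ℝ) (r : ℝ) (f g : ℝ → Euc n → ℝ) (u₀ : Euc n → ℝ)
    (u : ℝ → Euc n → ℝ) : Prop :=
  (∀ᵐ t ∂(volume.restrict I), ∀ᵐ x ∂(volume.restrict Ω),
      timeDeriv u t x - divKGrad κ (u t) x - |u t x| ^ (r - 1) * u t x = f t x) ∧
  (∀ x ∈ Ω, u 0 x = u₀ x) ∧
  (∀ᵐ t ∂(volume.restrict I), ∀ x ∈ frontier Ω,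
      κ x * normalD ν (u t) x + κs x * u t x = g t x)

/-- Almost-everywhere equality on `G × I`. -/
def AEEqOn (G : Set (Euc n)) (I : Set ℝ) (u v : ℝ → Euc n → ℝ) : Prop :=
  ∀ᵐ t ∂(volume.restrict I), ∀ᵐ x ∂(volume.restrict G), u t x = v t x

/-- Membership in `L_q(I; L_p(G))`. -/
def MemLqLp (I : Set ℝ) (q p : ℝ) (G : Set (Euc n)) (f : ℝ → Euc n → ℝ) : Prop :=
  MemLqOn I q (fun t => lpNormOn G p (f t)) ∧
  ∀ᵐ t ∂(volume.restrict I), MemLpOn G p (f t)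

/-- Membership in `L_{q,0}(ℝ₊; L_p(G))` (vanishing for `t<0`). -/
def MemLqLpZero (q p : ℝ) (G : Set (Euc n)) (f : ℝ → Euc n → ℝ) : Prop :=
  MemLqLp univ q p G f ∧ ∀ t < (0 : ℝ), ∀ x, f t x = 0

/-- Exponential weight in time: `(e^{at}u)(t,x) = e^{at} u(t,x)`. -/
def expW (a : ℝ) (u : ℝ → Euc n → ℝ) : ℝ → Euc n → ℝ :=
  fun t x => Real.exp (a * t) * u t x

/-- `Λ₁`, the first eigenvalue of `-div(κ∇·)` with zero Robin boundary condition. -/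
def firstEigen (Ω : Set (Euc n)) (ν : Euc n → Euc n) (κ κs : Euc n → ℝ) : ℝ :=
  sInf {μ : ℝ | ∃ w : Euc n → ℝ,
    (¬ ∀ᵐ x ∂(volume.restrict Ω), w x = 0) ∧ MemDom Ω ν κ κs 2 w ∧
    ∀ x ∈ Ω, -divKGrad κ w x = μ * w x}

/-- Membership in `C₀^∞(ℝ₊; L_p(G))`. -/
def MemC0InfLp (p : ℝ) (G : Set (Euc n)) (f : ℝ → Euc n → ℝ) : Prop :=
  (∀ x, ∀ k : ℕ, ContDiff ℝ k fun t => f t x) ∧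
  (∃ K : Set ℝ, IsCompact K ∧ K ⊆ Ioi 0 ∧ ∀ t ∉ K, ∀ x, f t x = 0) ∧
  (∀ t, MemLpOn G p (f t))

/-- K-functional of the couple `(L_p(G), W^k_p(G))`, used for Besov spaces. -/
def KSob (k : ℕ) (p : ℝ) (G : Set (Euc n)) (t : ℝ) (u : Euc n → ℝ) : ℝ :=
  sInf {c : ℝ | ∃ u0 u1 : Euc n → ℝ, (∀ x, u x = u0 x + u1 x) ∧ MemLpOn G p u0 ∧
    MemSobolev k p G u1 ∧ c = lpNormOn G p u0 + t * sobolevNorm k p G u1}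

/-- `⟨r⟩ = min {k ∈ ℤ : k > r}` for `r ≥ 0`. -/
def besovExp (r : ℝ) : ℕ := Nat.floor r + 1

/-- Membership in the Besov space `B^r_{p,q}(G) = (L_p(G), W^{⟨r⟩}_p(G))_{r/⟨r⟩,q}`. -/
def MemBesov (r p q : ℝ) (G : Set (Euc n)) (u : Euc n → ℝ) : Prop :=
  MemLpOn G p u ∧
  IntegrableOn
    (fun t => (t ^ (-(r / (besovExp r : ℝ))) * KSob (besovExp r) p G t u) ^ q / t) (Ioi 0)

/-- Membership in `B^r_{p,q,0}(G)`: a member of `B^r_{p,q}(ℝⁿ)` supported in `cl G`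
whose extra boundary-weighted norm is finite. -/
def MemBesov0 (r p q : ℝ) (G : Set (Euc n)) (u : Euc n → ℝ) : Prop :=
  MemBesov r p q univ u ∧ Function.support u ⊆ closure G ∧
  MemLqOn (Ioi 0) q
    (fun t => t ^ (-(r + 1 / q)) *
      lpNormOn {x ∈ G | Metric.infDist x (frontier G) < t} p u)

/-- Euclidean dot product. -/
def dotE (x ξ : Euc n) : ℝ := ∑ i, x i * ξ i

/-- The Fourier–Laplace transform `L_{(x,t)}[f](ξ,λ)`. -/
def FLtrans (f : ℝ → Euc n → ℝ) (ξ : Euc n) (l : ℂ) : ℂ :=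
  ((2 * Real.pi) ^ (-((n : ℝ) + 1) / 2) : ℝ) •
    ∫ t : ℝ, ∫ x : Euc n,
      Complex.exp (-(l * (t : ℂ)) - Complex.I * ((dotE x ξ : ℝ) : ℂ)) * ((f t x : ℝ) : ℂ)

/-- The inverse Fourier–Laplace transform `L⁻¹_{(ξ,λ₂)}[g](x,t)` (at `λ₁ = 0`). -/
def invFLtrans (g : Euc n → ℂ → ℂ) (t : ℝ) (x : Euc n) : ℂ :=
  ((2 * Real.pi) ^ (-((n : ℝ) + 1) / 2) : ℝ) •
    ∫ l2 : ℝ, ∫ ξ : Euc n,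
      Complex.exp (Complex.I * (l2 : ℂ) * (t : ℂ) + Complex.I * ((dotE x ξ : ℝ) : ℂ)) *
        g ξ (Complex.I * (l2 : ℂ))

/-- The index of the last coordinate. -/
def lastIdx (m : ℕ) (hm : 0 < m) : Fin m := ⟨m - 1, Nat.sub_lt hm Nat.one_pos⟩

/-- The upper half space `ℝⁿ₊ = {x : x_n > 0}`. -/
def upperHalf (m : ℕ) (hm : 0 < m) : Set (Euc m) := {x | 0 < x (lastIdx m hm)}

/-- The `n`-dimensional inverse Fourier transform of a Banach-space-valued function. -/
def invFourierN {X : Type*} [NormedAddCommGroup X] [NormedSpace ℂ X]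
    (g : Euc n → X) (x : Euc n) : X :=
  ((2 * Real.pi) ^ (-(n : ℝ) / 2) : ℝ) •
    ∫ ξ : Euc n, Complex.exp (Complex.I * ((dotE x ξ : ℝ) : ℂ)) • g ξ

/-- The Rademacher functions `r_j(t) = sign (sin (2^j π t))`. -/
def rademacher (j : ℕ) (t : ℝ) : ℝ := Real.sign (Real.sin (2 ^ j * Real.pi * t))

/-- Convolution operator with kernel `P(·,t)`. -/
def convK (P : Euc n → ℝ → ℝ) (t : ℝ) (f : Euc n → ℝ) (x : Euc n) : ℝ :=
  ∫ y : Euc n, P (x - y) t * f y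

/-- `A(ξ',λ)^s = (|ξ'|² + κ⁻¹(λ+1))^{s/2}` (principal branch). -/
def Apow (κ s : ℝ) (ξ : Euc n) (l : ℂ) : ℂ :=
  (((‖ξ‖ ^ 2 : ℝ) : ℂ) + ((κ⁻¹ : ℝ) : ℂ) * (l + 1)) ^ ((s / 2 : ℝ) : ℂ)


section CRSE
open Complex

private lemma crse_ofReal_mul_cpow {a : ℝ} (ha : 0 < a) {z : ℂ} (hz : z ≠ 0) (c : ℝ) :
    ((a : ℂ) * z) ^ (c : ℂ) = ((a ^ c : ℝ) : ℂ) * z ^ (c : ℂ) := by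
  have ha' : (a : ℂ) ≠ 0 := by exact_mod_cast ha.ne'
  rw [Complex.cpow_def_of_ne_zero (mul_ne_zero ha' hz), Complex.cpow_def_of_ne_zero hz,
    Complex.log_ofReal_mul ha hz, add_mul, Complex.exp_add]
  congr 1
  rw [Real.rpow_def_of_pos ha, Complex.ofReal_exp]
  congr 1
  push_cast
  ring

private def crP (κ : ℝ) {m : ℕ} (p : Euc m × ℂ) : ℂ :=
  ((‖p.1‖ ^ 2 : ℝ) : ℂ) + ((κ⁻¹ : ℝ) : ℂ) * p.2

private lemma crse_contDiff_P (κ : ℝ) {m : ℕ} (n : ℕ) : ContDiff ℝ n (crP κ (m := m)) := by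
  apply ContDiff.add
  · exact Complex.ofRealCLM.contDiff.comp ((contDiff_norm_sq ℝ).comp contDiff_fst)
  · exact contDiff_const.mul contDiff_snd

private lemma crse_contDiffAt_cpow (c : ℝ) {z : ℂ} (hz : z ∈ Complex.slitPlane) (n : ℕ) :
    ContDiffAt ℝ n (fun w : ℂ => w ^ (c : ℂ)) z :=
  ContDiffAt.restrict_scalars ℝ ((analyticAt_id.cpow analyticAt_const hz).contDiffAt)

private lemma crse_contDiffOn_F (κ : ℝ) {m : ℕ} (c : ℝ) (n : ℕ) :
    ContDiffOn ℝ n (fun p : Euc m × ℂ => crP κ p ^ (c : ℂ)) (crP κ ⁻¹' Complex.slitPlane) := by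
  intro p hp
  exact (ContDiffAt.comp p (crse_contDiffAt_cpow c hp n)
    ((crse_contDiff_P κ n).contDiffAt)).contDiffWithinAt

private lemma crse_mem_U {κ : ℝ} (hκ : 0 < κ) {m : ℕ} (η : Euc m) {w : ℂ} (hw : 0 < w.re) :
    crP κ (η, w) ∈ Complex.slitPlane := by
  apply Or.inl
  have : (crP κ (η, w)).re = ‖η‖ ^ 2 + κ⁻¹ * w.re := by
    simp [crP, Complex.add_re, Complex.re_ofReal_mul, ← Complex.ofReal_pow]
  rw [this]
  have h1 : 0 < κ⁻¹ * w.re := mul_pos (inv_pos.2 hκ) hw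
  nlinarith [sq_nonneg ‖η‖]

private lemma crse_slice_contDiff {κ : ℝ} (hκ : 0 < κ) {m : ℕ} (c : ℝ) {w : ℂ}
    (hw : 0 < w.re) (n : ℕ) :
    ContDiff ℝ n (fun η : Euc m => crP κ (η, w) ^ (c : ℂ)) := by
  rw [contDiff_iff_contDiffAt]
  intro η
  have hP : ContDiffAt ℝ n (fun η : Euc m => crP κ (η, w)) η :=
    ((crse_contDiff_P κ n).comp (contDiff_id.prodMk contDiff_const)).contDiffAt
  exact ContDiffAt.comp η (crse_contDiffAt_cpow c (crse_mem_U hκ η hw) n) hP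

private def crK (m : ℕ) : Set (Euc m × ℂ) :=
  {p | ‖p.1‖ ^ 2 + ‖p.2‖ = 1 ∧ 0 ≤ p.2.re}

private lemma crse_isCompact_K (m : ℕ) : IsCompact (crK m) := by
  have hclosed : IsClosed (crK m) := by
    have h1 : Continuous fun p : Euc m × ℂ => ‖p.1‖ ^ 2 + ‖p.2‖ :=
      ((continuous_fst.norm.pow 2).add (continuous_snd.norm))
    have h2 : Continuous fun p : Euc m × ℂ => p.2.re :=
      Complex.continuous_re.comp continuous_snd
    exact (isClosed_singleton.preimage h1).inter (isClosed_Ici.preimage h2)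
  apply (isCompact_closedBall (0 : Euc m × ℂ) 2).of_isClosed_subset hclosed
  rintro ⟨η, w⟩ ⟨hsum, -⟩
  have h1 : ‖η‖ ≤ 1 := by nlinarith [norm_nonneg w, norm_nonneg η]
  have h2 : ‖w‖ ≤ 1 := by nlinarith [norm_nonneg η]
  rw [Metric.mem_closedBall, dist_zero_right, Prod.norm_def]
  simp only [max_le_iff]
  constructor <;> [linarith; linarith]

private lemma crse_K_subset_U {κ : ℝ} (hκ : 0 < κ) (m : ℕ) :
    crK m ⊆ crP κ ⁻¹' Complex.slitPlane := by
  rintro ⟨η, w⟩ ⟨hsum, hre⟩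
  simp only [Set.mem_preimage]
  have hre' : (crP κ (η, w)).re = ‖η‖ ^ 2 + κ⁻¹ * w.re := by
    simp [crP, Complex.add_re, Complex.re_ofReal_mul, ← Complex.ofReal_pow]
  have him' : (crP κ (η, w)).im = κ⁻¹ * w.im := by
    simp [crP, Complex.add_im, Complex.mul_im, ← Complex.ofReal_pow]
  rcases hre.lt_or_eq with hw | hw
  · exact Or.inl (by rw [hre']; nlinarith [sq_nonneg ‖η‖, mul_pos (inv_pos.2 hκ) hw])
  · rcases eq_or_ne η 0 with rfl | hη
    · have habs : ‖w‖ = 1 := by simpa using hsum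
      have hwim : w.im ≠ 0 := by
        intro h
        have : w = 0 := by
          apply Complex.ext
          · exact hw.symm
          · simpa using h
        rw [this] at habs; simp at habs
      exact Or.inr (by rw [him']; exact mul_ne_zero (by positivity) hwim)
    · refine Or.inl ?_
      rw [hre', ← hw]
      have : 0 < ‖η‖ := norm_pos_iff.2 hη
      nlinarith

private lemma crse_sup_bound {κ : ℝ} (hκ : 0 < κ) (m : ℕ) (c : ℝ) (k : ℕ) :
    ∃ C : ℝ, 0 < C ∧ ∀ i ≤ k, ∀ p ∈ crK m,
      ‖iteratedFDerivWithin ℝ i (fun q : Euc m × ℂ => crP κ q ^ (c : ℂ))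
        (crP κ ⁻¹' Complex.slitPlane) p‖ ≤ C := by
  have hU : IsOpen (crP κ ⁻¹' Complex.slitPlane : Set (Euc m × ℂ)) :=
    Complex.isOpen_slitPlane.preimage (crse_contDiff_P κ 0).continuous
  have hb : ∀ i : ℕ, ∃ C : ℝ, ∀ p ∈ crK m,
      ‖iteratedFDerivWithin ℝ i (fun q : Euc m × ℂ => crP κ q ^ (c : ℂ))
        (crP κ ⁻¹' Complex.slitPlane) p‖ ≤ C := by
    intro i
    apply (crse_isCompact_K m).exists_bound_of_continuousOn
    exact ((crse_contDiffOn_F κ c i).continuousOn_iteratedFDerivWithin le_rfl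
      hU.uniqueDiffOn).mono (crse_K_subset_U hκ m)
  choose Cf hCf using hb
  refine ⟨∑ i ∈ Finset.range (k + 1), |Cf i| + 1, by positivity, ?_⟩
  intro i hi p hp
  have h1 : |Cf i| ≤ ∑ j ∈ Finset.range (k + 1), |Cf j| :=
    Finset.single_le_sum (f := fun j => |Cf j|) (fun j _ => abs_nonneg _)
      (Finset.mem_range.2 (Nat.lt_succ_of_le hi))
  have := (hCf i p hp).trans (le_abs_self _)
  linarith

private lemma crse_affine_bound {E F : Type*} [NormedAddCommGroup E] [NormedSpace ℝ E]
    [NormedAddCommGroup F] [NormedSpace ℝ F] (g : E →L[ℝ] F) (c : F) (x : E) {i : ℕ}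
    (hi : 1 ≤ i) {D : ℝ} (hD : ‖g‖ ≤ D) :
    ‖iteratedFDeriv ℝ i (fun y => g y + c) x‖ ≤ D ^ i := by
  have hD0 : 0 ≤ D := (norm_nonneg g).trans hD
  obtain ⟨j, rfl⟩ : ∃ j, i = j + 1 := ⟨i - 1, (Nat.succ_pred_eq_of_pos hi).symm⟩
  rw [← norm_iteratedFDeriv_fderiv]
  have hfd : (fderiv ℝ fun y => g y + c) = fun _ => (g : E →L[ℝ] F) := by
    funext y
    rw [fderiv_add_const]
    exact g.fderiv
  rw [hfd]
  rcases Nat.eq_zero_or_pos j with rfl | hj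
  · rw [norm_iteratedFDeriv_zero]
    simpa using hD
  · rw [iteratedFDeriv_const_of_ne hj.ne']
    simp only [Pi.zero_apply, norm_zero]
    positivity

private lemma crse_norm_inl_le (m : ℕ) : ‖ContinuousLinearMap.inl ℝ (Euc m) ℂ‖ ≤ 1 := by
  apply ContinuousLinearMap.opNorm_le_bound _ zero_le_one
  intro η
  rw [ContinuousLinearMap.inl_apply, one_mul, Prod.norm_def]
  simp [le_refl, norm_nonneg]

private lemma crse_slice_bound {κ : ℝ} (hκ : 0 < κ) {m : ℕ} (c : ℝ) (k : ℕ) {C₀ : ℝ}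
    (hC₀ : ∀ i ≤ k, ∀ p ∈ crK m,
      ‖iteratedFDerivWithin ℝ i (fun q : Euc m × ℂ => crP κ q ^ (c : ℂ))
        (crP κ ⁻¹' Complex.slitPlane) p‖ ≤ C₀)
    {η₀ : Euc m} {w : ℂ} (hw : 0 < w.re) (hmem : (η₀, w) ∈ crK m) {i : ℕ} (hik : i ≤ k) :
    ‖iteratedFDeriv ℝ i (fun η : Euc m => crP κ (η, w) ^ (c : ℂ)) η₀‖ ≤ (Nat.factorial i : ℝ) * C₀ := by
  have hU : IsOpen (crP κ ⁻¹' Complex.slitPlane : Set (Euc m × ℂ)) :=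
    Complex.isOpen_slitPlane.preimage (crse_contDiff_P κ 0).continuous
  have heq : (fun η : Euc m => (η, w)) = fun η : Euc m =>
      (ContinuousLinearMap.inl ℝ (Euc m) ℂ) η + ((0 : Euc m), w) := by
    funext η
    simp [Prod.mk_add_mk]
  have h := norm_iteratedFDerivWithin_comp_le (𝕜 := ℝ)
    (g := fun q : Euc m × ℂ => crP κ q ^ (c : ℂ))
    (f := fun η : Euc m => (η, w)) (n := i) (N := (i : WithTop ℕ∞))
    (s := Set.univ) (t := crP κ ⁻¹' Complex.slitPlane) (x := η₀) (C := C₀) (D := 1)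
    (crse_contDiffOn_F κ c i) ((contDiff_id.prodMk contDiff_const).contDiffOn) le_rfl
    hU.uniqueDiffOn uniqueDiffOn_univ
    (fun η _ => crse_mem_U hκ η hw) (Set.mem_univ η₀)
    (fun j hj => hC₀ j (hj.trans hik) _ hmem)
    (by
      intro j hj1 hji
      rw [iteratedFDerivWithin_univ, heq]
      exact crse_affine_bound _ _ _ hj1 (crse_norm_inl_le m))
  rw [iteratedFDerivWithin_univ] at h
  simpa [Function.comp_def] using h

private lemma crse_geom {m : ℕ} (ξ : Euc m) {l : ℂ} (hl : 0 ≤ l.re) {r : ℝ}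
    (hr : r = Real.sqrt (‖ξ‖ ^ 2 + ‖l + 1‖)) :
    1 ≤ r ∧ r ^ 2 = ‖ξ‖ ^ 2 + ‖l + 1‖ ∧
      r ≤ ‖ξ‖ + ‖l‖ ^ ((1 : ℝ) / 2) + 1 ∧
      ‖ξ‖ + ‖l‖ ^ ((1 : ℝ) / 2) + 1 ≤ 4 * r := by
  have habs1 : 1 ≤ ‖l + 1‖ := by
    have h1 : (l + 1).re ≤ ‖l + 1‖ := Complex.re_le_norm _
    rw [Complex.add_re, Complex.one_re] at h1
    linarith
  have hsumnn : (0 : ℝ) ≤ ‖ξ‖ ^ 2 + ‖l + 1‖ := by positivity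
  have hr2 : r ^ 2 = ‖ξ‖ ^ 2 + ‖l + 1‖ := by rw [hr, Real.sq_sqrt hsumnn]
  have hr1 : 1 ≤ r := by
    have h1 : Real.sqrt 1 ≤ Real.sqrt (‖ξ‖ ^ 2 + ‖l + 1‖) := by
      apply Real.sqrt_le_sqrt
      nlinarith [sq_nonneg ‖ξ‖]
    rw [Real.sqrt_one] at h1
    rw [hr]; exact h1
  have hr0 : 0 < r := lt_of_lt_of_le one_pos hr1
  set t : ℝ := ‖l‖ ^ ((1 : ℝ) / 2) with hts
  have ht0 : 0 ≤ t := Real.rpow_nonneg (norm_nonneg l) _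
  have ht2 : t ^ 2 = ‖l‖ := by
    rw [hts, ← Real.rpow_natCast (‖l‖ ^ ((1 : ℝ) / 2)) 2,
      ← Real.rpow_mul (norm_nonneg l)]
    norm_num
  have habs_le : ‖l + 1‖ ≤ ‖l‖ + 1 := by
    simpa using norm_add_le l 1
  have habs_ge : ‖l‖ ≤ ‖l + 1‖ + 1 := by
    calc ‖l‖ = ‖(l + 1) + (-1)‖ := by ring_nf
    _ ≤ ‖l + 1‖ + ‖(-1 : ℂ)‖ := norm_add_le _ _
    _ = ‖l + 1‖ + 1 := by simp
  constructor
  · exact hr1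
  refine ⟨hr2, ?_, ?_⟩
  · have hM2 : ‖ξ‖ ^ 2 + ‖l + 1‖ ≤ (‖ξ‖ + t + 1) ^ 2 := by
      nlinarith [norm_nonneg ξ, ht0, ht2]
    calc r = Real.sqrt (‖ξ‖ ^ 2 + ‖l + 1‖) := hr
    _ ≤ Real.sqrt ((‖ξ‖ + t + 1) ^ 2) := Real.sqrt_le_sqrt hM2
    _ = ‖ξ‖ + t + 1 := Real.sqrt_sq (by positivity)
  · have hξr : ‖ξ‖ ≤ r := by nlinarith [norm_nonneg ξ, hr2]
    have htr : t ≤ 2 * r := by nlinarith [ht2, habs_ge, hr2, norm_nonneg ξ]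
    linarith

private lemma crse_rpow_cmp {a b : ℝ} (ha : 0 < a) (hab : a ≤ b) (hb4 : b ≤ 4 * a) (t : ℝ) :
    a ^ t ≤ 4 ^ |t| * b ^ t := by
  rcases le_or_gt 0 t with ht | ht
  · have h1 : a ^ t ≤ b ^ t := Real.rpow_le_rpow ha.le hab ht
    have h2 : (1 : ℝ) ≤ 4 ^ |t| := Real.one_le_rpow (by norm_num) (abs_nonneg t)
    nlinarith [Real.rpow_nonneg (ha.le.trans hab) t]
  · have hb0 : 0 < b := lt_of_lt_of_le ha hab
    have h4 : b / 4 ≤ a := by linarith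
    have h1 : a ^ t ≤ (b / 4) ^ t :=
      Real.rpow_le_rpow_of_nonpos (by positivity) h4 ht.le
    rw [Real.div_rpow hb0.le (by norm_num)] at h1
    rw [abs_of_neg ht, Real.rpow_neg (by norm_num)]
    rw [div_eq_inv_mul] at h1
    exact h1

private lemma crse_part1 {κ : ℝ} (hκ : 0 < κ) {m : ℕ} (s : ℝ) (k : ℕ) :
    ∃ C : ℝ, 0 < C ∧ ∀ ξ : Euc m, ∀ l : ℂ, 0 ≤ l.re →
      ‖iteratedFDeriv ℝ k (fun η : Euc m => Apow κ s η l) ξ‖ ≤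
        C * (‖ξ‖ + ‖l‖ ^ ((1 : ℝ) / 2) + 1) ^ (s - (k : ℝ)) := by
  obtain ⟨C₀, hC₀pos, hC₀⟩ := crse_sup_bound hκ m (s / 2) k
  refine ⟨(Nat.factorial k : ℝ) * C₀ * 4 ^ |s - (k : ℝ)|, by positivity, ?_⟩
  intro ξ l hl
  set M : ℝ := ‖ξ‖ + ‖l‖ ^ ((1 : ℝ) / 2) + 1 with hM
  set r : ℝ := Real.sqrt (‖ξ‖ ^ 2 + ‖l + 1‖) with hrdef
  obtain ⟨hr1, hr2, hrM, hMr⟩ := crse_geom ξ hl hrdef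
  have hr0 : (0 : ℝ) < r := lt_of_lt_of_le one_pos hr1
  have hl1re : 0 < (l + 1).re := by
    rw [Complex.add_re, Complex.one_re]; linarith
  set w : ℂ := ((r⁻¹ ^ 2 : ℝ) : ℂ) * (l + 1) with hwdef
  have hwre : 0 < w.re := by
    rw [hwdef, Complex.re_ofReal_mul]
    positivity
  have hK : ((r⁻¹ • ξ : Euc m), w) ∈ crK m := by
    constructor
    · show ‖r⁻¹ • ξ‖ ^ 2 + ‖w‖ = 1
      rw [norm_smul, hwdef, norm_mul, Complex.norm_real]
      simp only [Real.norm_eq_abs]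
      rw [abs_of_pos (by positivity : (0:ℝ) < r⁻¹), abs_of_pos (by positivity : (0:ℝ) < r⁻¹ ^ 2),
        mul_pow, (by rw [inv_pow] : (r⁻¹:ℝ) ^ 2 = (r ^ 2)⁻¹), hr2]
      have hpos : 0 < ‖ξ‖ ^ 2 + ‖l + 1‖ := by
        have h1 := Complex.re_le_norm (l + 1)
        nlinarith [sq_nonneg ‖ξ‖]
      field_simp
    · exact hwre.le
  set σ : Euc m →L[ℝ] Euc m := r⁻¹ • ContinuousLinearMap.id ℝ (Euc m) with hσdef
  have hσapp : ∀ η : Euc m, σ η = r⁻¹ • η := fun η => rfl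
  set G : Euc m → ℂ := fun η => crP κ (η, w) ^ (((s / 2 : ℝ)) : ℂ) with hGdef
  have hGsm : ContDiff ℝ k G := crse_slice_contDiff hκ (s / 2) hwre k
  set F' : Euc m → ℂ := fun η => ((r ^ s : ℝ) : ℂ) * G η with hF'def
  have hF'sm : ContDiff ℝ k F' := contDiff_const.mul hGsm
  have hHeq : (fun η : Euc m => Apow κ s η l) = F' ∘ σ := by
    funext η
    simp only [Function.comp_apply, hσapp, hF'def, hGdef]
    have hz : (((‖η‖ ^ 2 : ℝ) : ℂ) + ((κ⁻¹ : ℝ) : ℂ) * (l + 1)) ≠ 0 := by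
      intro h
      have h0 := congrArg Complex.re h
      simp only [Complex.add_re, Complex.re_ofReal_mul, Complex.ofReal_re, Complex.one_re,
        Complex.zero_re] at h0
      nlinarith [sq_nonneg ‖η‖, mul_pos (inv_pos.2 hκ) hl1re]
    have hbase : crP κ (r⁻¹ • η, w) =
        ((r⁻¹ ^ 2 : ℝ) : ℂ) * (((‖η‖ ^ 2 : ℝ) : ℂ) + ((κ⁻¹ : ℝ) : ℂ) * (l + 1)) := by
      show ((‖r⁻¹ • η‖ ^ 2 : ℝ) : ℂ) + ((κ⁻¹ : ℝ) : ℂ) * w = _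
      rw [norm_smul, Real.norm_eq_abs, abs_of_pos (by positivity : (0:ℝ) < r⁻¹), hwdef]
      push_cast
      ring
    have hApow : Apow κ s η l =
        (((‖η‖ ^ 2 : ℝ) : ℂ) + ((κ⁻¹ : ℝ) : ℂ) * (l + 1)) ^ ((s / 2 : ℝ) : ℂ) := rfl
    rw [hApow, hbase, crse_ofReal_mul_cpow (by positivity) hz (s / 2), ← mul_assoc,
      ← Complex.ofReal_mul]
    have hreal : r ^ s * (r⁻¹ ^ 2) ^ (s / 2) = 1 := by
      have h1 : (r⁻¹ ^ 2 : ℝ) = r ^ (-2 : ℝ) := by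
        rw [Real.rpow_neg hr0.le, inv_pow]
        congr 1
        rw [← Real.rpow_natCast r 2]
        norm_num
      rw [h1, ← Real.rpow_mul hr0.le, ← Real.rpow_add hr0]
      have h2 : s + -2 * (s / 2) = 0 := by ring
      rw [h2, Real.rpow_zero]
    rw [hreal]
    simp
  rw [hHeq, σ.iteratedFDeriv_comp_right hF'sm ξ le_rfl]
  have hσn : ‖σ‖ ≤ r⁻¹ := by
    apply ContinuousLinearMap.opNorm_le_bound _ (by positivity)
    intro η
    rw [hσapp, norm_smul, Real.norm_eq_abs, abs_of_pos (by positivity : (0:ℝ) < r⁻¹)]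
  have hb1 : ‖(iteratedFDeriv ℝ k F' (σ ξ)).compContinuousLinearMap fun _ => σ‖ ≤
      ‖iteratedFDeriv ℝ k F' (σ ξ)‖ * r⁻¹ ^ k := by
    refine le_trans (ContinuousMultilinearMap.norm_compContinuousLinearMap_le _ _) ?_
    have hp : (∏ _i : Fin k, ‖σ‖) ≤ r⁻¹ ^ k := by
      rw [Finset.prod_const, Finset.card_univ, Fintype.card_fin]
      exact pow_le_pow_left₀ (norm_nonneg σ) hσn k
    exact mul_le_mul_of_nonneg_left hp (norm_nonneg _)
  have hF'G : F' = ⇑(ContinuousLinearMap.mul ℝ ℂ ((r ^ s : ℝ) : ℂ)) ∘ G := by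
    funext η
    simp [hF'def, ContinuousLinearMap.mul_apply']
  have hb2 : ‖iteratedFDeriv ℝ k F' (σ ξ)‖ ≤ r ^ s * ((Nat.factorial k : ℝ) * C₀) := by
    rw [hF'G, (ContinuousLinearMap.mul ℝ ℂ ((r ^ s : ℝ) : ℂ)).iteratedFDeriv_comp_left
      (hGsm.contDiffAt (x := σ ξ)) le_rfl]
    refine le_trans (ContinuousLinearMap.norm_compContinuousMultilinearMap_le _ _) ?_
    have h1 : ‖ContinuousLinearMap.mul ℝ ℂ ((r ^ s : ℝ) : ℂ)‖ ≤ r ^ s := by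
      refine le_trans (ContinuousLinearMap.opNorm_mul_apply_le _ _ _) ?_
      rw [Complex.norm_real, Real.norm_eq_abs,
        _root_.abs_of_nonneg (Real.rpow_nonneg hr0.le s)]
    have h2 : ‖iteratedFDeriv ℝ k G (σ ξ)‖ ≤ (Nat.factorial k : ℝ) * C₀ := by
      rw [hGdef, hσapp]
      exact crse_slice_bound hκ (s / 2) k hC₀ hwre hK (le_refl k)
    exact mul_le_mul h1 h2 (norm_nonneg _) (Real.rpow_nonneg hr0.le s)
  have hrsk : r ^ s * r⁻¹ ^ k = r ^ (s - (k : ℝ)) := by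
    rw [sub_eq_add_neg, Real.rpow_add hr0, Real.rpow_neg hr0.le, Real.rpow_natCast, ← inv_pow]
  calc ‖(iteratedFDeriv ℝ k F' (σ ξ)).compContinuousLinearMap fun _ => σ‖
      ≤ ‖iteratedFDeriv ℝ k F' (σ ξ)‖ * r⁻¹ ^ k := hb1
  _ ≤ (r ^ s * ((Nat.factorial k : ℝ) * C₀)) * r⁻¹ ^ k := by
      apply mul_le_mul_of_nonneg_right hb2 (by positivity)
  _ = ((Nat.factorial k : ℝ) * C₀) * (r ^ s * r⁻¹ ^ k) := by ring
  _ = ((Nat.factorial k : ℝ) * C₀) * r ^ (s - (k : ℝ)) := by rw [hrsk]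
  _ ≤ ((Nat.factorial k : ℝ) * C₀) * (4 ^ |s - (k : ℝ)| * M ^ (s - (k : ℝ))) := by
      apply mul_le_mul_of_nonneg_left (crse_rpow_cmp hr0 hrM hMr (s - (k : ℝ))) (by positivity)
  _ = (Nat.factorial k : ℝ) * C₀ * 4 ^ |s - (k : ℝ)| * M ^ (s - (k : ℝ)) := by ring

private lemma crse_part2 {m : ℕ} (s : ℝ) (k : ℕ) :
    ∃ C : ℝ, 0 < C ∧ ∀ ξ : Euc m, ξ ≠ 0 →
      ‖iteratedFDeriv ℝ k (fun η : Euc m => ‖η‖ ^ s) ξ‖ ≤ C * ‖ξ‖ ^ (s - (k : ℝ)) := by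
  have hU : IsOpen ({0}ᶜ : Set (Euc m)) := isClosed_singleton.isOpen_compl
  have hsm : ContDiffOn ℝ k (fun η : Euc m => ‖η‖ ^ s) {0}ᶜ := by
    intro η hη
    have hη' : η ≠ 0 := hη
    exact ((Real.contDiffAt_rpow_const_of_ne (norm_ne_zero_iff.2 hη')).comp η
      (contDiffAt_norm ℝ hη')).contDiffWithinAt
  have hsub : Metric.sphere (0 : Euc m) 1 ⊆ ({0}ᶜ : Set (Euc m)) := by
    intro η hη
    simp only [Metric.mem_sphere, dist_zero_right] at hη
    simp only [Set.mem_compl_iff, Set.mem_singleton_iff]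
    intro h
    rw [h] at hη; simp at hη
  obtain ⟨C₂, hC₂⟩ := (isCompact_sphere (0 : Euc m) 1).exists_bound_of_continuousOn
    ((hsm.continuousOn_iteratedFDerivWithin (le_refl (k : WithTop ℕ∞)) hU.uniqueDiffOn).mono hsub)
  refine ⟨|C₂| + 1, by positivity, ?_⟩
  intro ξ hξ
  have hr0 : (0 : ℝ) < ‖ξ‖ := norm_pos_iff.2 hξ
  set r : ℝ := ‖ξ‖ with hrdef
  set σ : Euc m →L[ℝ] Euc m := r⁻¹ • ContinuousLinearMap.id ℝ (Euc m) with hσdef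
  have hσapp : ∀ η : Euc m, σ η = r⁻¹ • η := fun η => rfl
  have hη₀ : σ ξ ∈ Metric.sphere (0 : Euc m) 1 := by
    rw [Metric.mem_sphere, dist_zero_right, hσapp, norm_smul, Real.norm_eq_abs,
      abs_of_pos (by positivity : (0:ℝ) < r⁻¹)]
    field_simp
    exact hrdef.symm
  have hη₀U : σ ξ ∈ ({0}ᶜ : Set (Euc m)) := hsub hη₀
  have hσU : σ ⁻¹' ({0}ᶜ : Set (Euc m)) = ({0}ᶜ : Set (Euc m)) := by
    ext η
    simp only [Set.mem_preimage, Set.mem_compl_iff, Set.mem_singleton_iff, hσapp,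
      smul_eq_zero, inv_eq_zero]
    constructor
    · intro h hh; exact h (Or.inr hh)
    · intro h hh
      rcases hh with h1 | h2
      · exact hr0.ne' h1
      · exact h h2
  set H : Euc m → ℝ := fun η : Euc m => r ^ s * ‖η‖ ^ s with hHdef
  have hHsm : ContDiffOn ℝ k H {0}ᶜ := contDiffOn_const.mul hsm
  have hcomp : (fun η : Euc m => ‖η‖ ^ s) = H ∘ σ := by
    funext η
    simp only [Function.comp_apply, hσapp, hHdef]
    rw [norm_smul, Real.norm_eq_abs, abs_of_pos (by positivity : (0:ℝ) < r⁻¹),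
      Real.mul_rpow (by positivity) (norm_nonneg η), ← mul_assoc,
      ← Real.mul_rpow hr0.le (by positivity), mul_inv_cancel₀ hr0.ne', Real.one_rpow, one_mul]
  have hkey := σ.iteratedFDerivWithin_comp_right (f := H) hHsm hU.uniqueDiffOn
    (by rw [hσU]; exact hU.uniqueDiffOn) (x := ξ) hη₀U le_rfl
  have hξU : ξ ∈ ({0}ᶜ : Set (Euc m)) := hξ
  have hglob : iteratedFDeriv ℝ k (fun η : Euc m => ‖η‖ ^ s) ξ =
      iteratedFDerivWithin ℝ k (H ∘ σ) (σ ⁻¹' {0}ᶜ) ξ := by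
    rw [← hcomp, hσU, iteratedFDerivWithin_of_isOpen k hU hξU]
  rw [hglob, hkey]
  have hσn : ‖σ‖ ≤ r⁻¹ := by
    apply ContinuousLinearMap.opNorm_le_bound _ (by positivity)
    intro η
    rw [hσapp, norm_smul, Real.norm_eq_abs, abs_of_pos (by positivity : (0:ℝ) < r⁻¹)]
  have hb1 : ‖(iteratedFDerivWithin ℝ k H {0}ᶜ (σ ξ)).compContinuousLinearMap fun _ => σ‖ ≤
      ‖iteratedFDerivWithin ℝ k H {0}ᶜ (σ ξ)‖ * r⁻¹ ^ k := by
    refine le_trans (ContinuousMultilinearMap.norm_compContinuousLinearMap_le _ _) ?_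
    have hp : (∏ _i : Fin k, ‖σ‖) ≤ r⁻¹ ^ k := by
      rw [Finset.prod_const, Finset.card_univ, Fintype.card_fin]
      exact pow_le_pow_left₀ (norm_nonneg σ) hσn k
    exact mul_le_mul_of_nonneg_left hp (norm_nonneg _)
  have hHg : H = ⇑((r ^ s) • ContinuousLinearMap.id ℝ ℝ) ∘ (fun η : Euc m => ‖η‖ ^ s) := by
    funext η
    simp [hHdef, ContinuousLinearMap.smul_apply, smul_eq_mul]
  have hb2 : ‖iteratedFDerivWithin ℝ k H {0}ᶜ (σ ξ)‖ ≤ r ^ s * |C₂| := by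
    rw [hHg, ContinuousLinearMap.iteratedFDerivWithin_comp_left _ (hsm _ hη₀U) hU.uniqueDiffOn hη₀U
      le_rfl]
    refine le_trans (ContinuousLinearMap.norm_compContinuousMultilinearMap_le _ _) ?_
    have h1 : ‖(r ^ s) • ContinuousLinearMap.id ℝ ℝ‖ ≤ r ^ s := by
      apply ContinuousLinearMap.opNorm_le_bound _ (by positivity)
      intro x
      rw [ContinuousLinearMap.smul_apply, ContinuousLinearMap.id_apply, norm_smul,
        Real.norm_eq_abs, _root_.abs_of_nonneg (Real.rpow_nonneg hr0.le s)]
    have h2 : ‖iteratedFDerivWithin ℝ k (fun η : Euc m => ‖η‖ ^ s) {0}ᶜ (σ ξ)‖ ≤ |C₂| :=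
      (hC₂ _ hη₀).trans (le_abs_self C₂)
    exact mul_le_mul h1 h2 (norm_nonneg _) (Real.rpow_nonneg hr0.le s)
  have hrsk : r ^ s * r⁻¹ ^ k = r ^ (s - (k : ℝ)) := by
    rw [sub_eq_add_neg, Real.rpow_add hr0, Real.rpow_neg hr0.le, Real.rpow_natCast, ← inv_pow]
  calc ‖(iteratedFDerivWithin ℝ k H {0}ᶜ (σ ξ)).compContinuousLinearMap fun _ => σ‖
      ≤ ‖iteratedFDerivWithin ℝ k H {0}ᶜ (σ ξ)‖ * r⁻¹ ^ k := hb1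
  _ ≤ (r ^ s * |C₂|) * r⁻¹ ^ k := mul_le_mul_of_nonneg_right hb2 (by positivity)
  _ = |C₂| * (r ^ s * r⁻¹ ^ k) := by ring
  _ = |C₂| * r ^ (s - (k : ℝ)) := by rw [hrsk]
  _ ≤ (|C₂| + 1) * r ^ (s - (k : ℝ)) := by
      apply mul_le_mul_of_nonneg_right (by linarith) (Real.rpow_nonneg hr0.le _)

private lemma crse_reA {κ : ℝ} (hκ : 0 < κ) {m : ℕ} (ξ : Euc m) {l : ℂ} (hl : 0 ≤ l.re) :
    Real.sqrt (min 1 κ⁻¹) / 8 * (‖ξ‖ + ‖l‖ ^ ((1 : ℝ) / 2) + 1) ≤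
      (Apow κ 1 ξ l).re := by
  have hκ' : (0 : ℝ) < κ⁻¹ := inv_pos.2 hκ
  have hl1re : 0 < (l + 1).re := by rw [Complex.add_re, Complex.one_re]; linarith
  set z : ℂ := ((‖ξ‖ ^ 2 : ℝ) : ℂ) + ((κ⁻¹ : ℝ) : ℂ) * (l + 1) with hzdef
  have hzre : z.re = ‖ξ‖ ^ 2 + κ⁻¹ * (l.re + 1) := by
    rw [hzdef]
    simp [Complex.add_re, Complex.re_ofReal_mul, Complex.one_re, ← Complex.ofReal_pow]
  have hzim : z.im = κ⁻¹ * l.im := by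
    rw [hzdef]
    simp [Complex.add_im, Complex.im_ofReal_mul, Complex.one_im, ← Complex.ofReal_pow]
  have hzrepos : 0 < z.re := by rw [hzre]; nlinarith [sq_nonneg ‖ξ‖]
  have hz : z ≠ 0 := fun h => by rw [h, Complex.zero_re] at hzrepos; exact lt_irrefl 0 hzrepos
  have hApow : Apow κ 1 ξ l = z ^ (((1 / 2 : ℝ)) : ℂ) := by rw [hzdef]; rfl
  rw [hApow]
  set A : ℂ := z ^ (((1 / 2 : ℝ)) : ℂ) with hAdef
  have hA2 : A * A = z := by
    rw [hAdef, ← Complex.cpow_add _ _ hz]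
    norm_num
  have hAre0 : 0 ≤ A.re := by
    rw [hAdef, Complex.cpow_def_of_ne_zero hz, Complex.exp_re]
    apply mul_nonneg (Real.exp_nonneg _)
    apply Real.cos_nonneg_of_mem_Icc
    have him : (Complex.log z * (((1 / 2 : ℝ)) : ℂ)).im = Complex.arg z * (1 / 2) := by
      simp [Complex.mul_im, Complex.log_im]
    rw [him]
    constructor
    · have := Complex.neg_pi_lt_arg z; linarith
    · have := Complex.arg_le_pi z; linarith
  have habsA : ‖A‖ ^ 2 = ‖z‖ := by
    rw [← hA2, norm_mul]; ring
  have hsq : A.re ^ 2 + A.im ^ 2 = ‖z‖ := by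
    rw [← habsA, Complex.sq_norm, Complex.normSq_apply]; ring
  have hrepart : A.re ^ 2 - A.im ^ 2 = z.re := by
    rw [← hA2, Complex.mul_re]; ring
  have h2re : ‖z‖ ≤ 2 * A.re ^ 2 := by nlinarith [hzrepos]
  have hzlb : (‖ξ‖ ^ 2 + κ⁻¹ * ‖l + 1‖) / 2 ≤ ‖z‖ := by
    have h1 : ‖ξ‖ ^ 2 ≤ ‖z‖ := by
      have := Complex.re_le_norm z
      nlinarith [hzre, mul_pos hκ' hl1re]
    have h2 : κ⁻¹ * ‖l + 1‖ ≤ ‖z‖ := by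
      have e2 : (κ⁻¹ * ‖l + 1‖) ^ 2 = (κ⁻¹ * (l.re + 1)) ^ 2 + (κ⁻¹ * l.im) ^ 2 := by
        have h3 : ‖l + 1‖ ^ 2 = (l.re + 1) ^ 2 + l.im ^ 2 := by
          rw [Complex.sq_norm, Complex.normSq_apply, Complex.add_re, Complex.add_im,
            Complex.one_re, Complex.one_im]
          ring
        rw [mul_pow, h3]
        ring
      have hX2 : (κ⁻¹ * ‖l + 1‖) ^ 2 ≤ ‖z‖ ^ 2 := by
        have e1 : ‖z‖ ^ 2 = z.re ^ 2 + z.im ^ 2 := by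
          rw [Complex.sq_norm, Complex.normSq_apply]; ring
        rw [e1, e2, hzre, hzim]
        nlinarith [sq_nonneg (‖ξ‖ ^ 2), mul_nonneg (sq_nonneg ‖ξ‖) (mul_nonneg hκ'.le hl1re.le)]
      calc κ⁻¹ * ‖l + 1‖
          = Real.sqrt ((κ⁻¹ * ‖l + 1‖) ^ 2) := (Real.sqrt_sq (by positivity)).symm
      _ ≤ Real.sqrt (‖z‖ ^ 2) := Real.sqrt_le_sqrt hX2
      _ = ‖z‖ := Real.sqrt_sq (norm_nonneg z)
    linarith
  set r : ℝ := Real.sqrt (‖ξ‖ ^ 2 + ‖l + 1‖) with hrdef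
  obtain ⟨hr1, hr2, hrM, hMr⟩ := crse_geom ξ hl hrdef
  have hr0 : (0 : ℝ) < r := lt_of_lt_of_le one_pos hr1
  set mn : ℝ := min 1 κ⁻¹ with hmndef
  have hmn0 : 0 < mn := lt_min one_pos hκ'
  have hmn1 : mn ≤ 1 := min_le_left _ _
  have hmnκ : mn ≤ κ⁻¹ := min_le_right _ _
  have hcore : mn * r ^ 2 / 4 ≤ A.re ^ 2 := by
    have h3 : mn * (‖ξ‖ ^ 2 + ‖l + 1‖) ≤ ‖ξ‖ ^ 2 + κ⁻¹ * ‖l + 1‖ := by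
      have ha : mn * ‖ξ‖ ^ 2 ≤ ‖ξ‖ ^ 2 := by nlinarith [sq_nonneg ‖ξ‖]
      have hb : mn * ‖l + 1‖ ≤ κ⁻¹ * ‖l + 1‖ :=
        mul_le_mul_of_nonneg_right hmnκ (norm_nonneg _)
      linarith
    rw [hr2]
    linarith [h2re, hzlb, h3]
  have hB0 : (0 : ℝ) ≤ Real.sqrt mn * r / 2 := by positivity
  have hArelb : Real.sqrt mn * r / 2 ≤ A.re := by
    have hBsq : (Real.sqrt mn * r / 2) ^ 2 = mn * r ^ 2 / 4 := by
      rw [div_pow, mul_pow, Real.sq_sqrt hmn0.le]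
      ring
    calc Real.sqrt mn * r / 2 = Real.sqrt ((Real.sqrt mn * r / 2) ^ 2) := (Real.sqrt_sq hB0).symm
    _ ≤ Real.sqrt (A.re ^ 2) := Real.sqrt_le_sqrt (by rw [hBsq]; exact hcore)
    _ = A.re := Real.sqrt_sq hAre0
  calc Real.sqrt mn / 8 * (‖ξ‖ + ‖l‖ ^ ((1 : ℝ) / 2) + 1)
      ≤ Real.sqrt mn / 8 * (4 * r) := by
        apply mul_le_mul_of_nonneg_left hMr (by positivity)
  _ = Real.sqrt mn * r / 2 := by ring
  _ ≤ A.re := hArelb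

private lemma crse_exp_bound : ∀ (i : ℕ) (z : ℂ), ‖iteratedFDeriv ℝ i Complex.exp z‖ ≤
    Real.exp z.re := by
  intro i
  induction i with
  | zero =>
    intro z
    rw [norm_iteratedFDeriv_zero, Complex.norm_exp]
  | succ n ih =>
    intro z
    rw [← norm_iteratedFDeriv_fderiv]
    have hfd : fderiv ℝ Complex.exp = ⇑(ContinuousLinearMap.mul ℝ ℂ) ∘ Complex.exp := by
      funext w
      have h := ((Complex.hasDerivAt_exp w).hasFDerivAt.restrictScalars ℝ).fderiv
      rw [h]
      ext v
      simp [ContinuousLinearMap.mul_apply', smul_eq_mul, mul_comm]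
    rw [hfd, (ContinuousLinearMap.mul ℝ ℂ).iteratedFDeriv_comp_left
      ((Complex.contDiff_exp (𝕜 := ℝ) (n := (n : WithTop ℕ∞))).contDiffAt (x := z)) le_rfl]
    refine le_trans (ContinuousLinearMap.norm_compContinuousMultilinearMap_le _ _) ?_
    calc ‖ContinuousLinearMap.mul ℝ ℂ‖ * ‖iteratedFDeriv ℝ n Complex.exp z‖
        ≤ 1 * Real.exp z.re := by
          apply mul_le_mul (ContinuousLinearMap.opNorm_mul_le ℝ ℂ) (ih z) (norm_nonneg _)
            zero_le_one
    _ = Real.exp z.re := one_mul _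

private lemma crse_poly_exp (k : ℕ) {d : ℝ} (hd : 0 < d) :
    ∃ B : ℝ, 0 < B ∧ ∀ t : ℝ, 0 ≤ t →
      max 1 t ^ k * Real.exp (-(2 * d) * t) ≤ B * Real.exp (-d * t) := by
  refine ⟨(Nat.factorial k : ℝ) * (1 / d) ^ k + 1, by positivity, ?_⟩
  intro t ht
  have hBpos : (0:ℝ) < (Nat.factorial k : ℝ) * (1 / d) ^ k := by positivity
  rcases le_total t 1 with h1 | h1
  · rw [max_eq_left h1, one_pow, one_mul]
    have h2 : Real.exp (-(2 * d) * t) ≤ Real.exp (-d * t) := by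
      apply Real.exp_le_exp.2
      nlinarith
    nlinarith [Real.exp_pos (-d * t)]
  · rw [max_eq_right h1]
    have h2 : (d * t) ^ k / (Nat.factorial k : ℝ) ≤ Real.exp (d * t) := by
      refine le_trans ?_ (Real.sum_le_exp_of_nonneg (by positivity) (k + 1))
      exact Finset.single_le_sum (f := fun i => (d * t) ^ i / (Nat.factorial i : ℝ))
        (fun j _ => by positivity) (Finset.self_mem_range_succ k)
    have h4 : t ^ k ≤ (Nat.factorial k : ℝ) * (1 / d) ^ k * Real.exp (d * t) := by
      have h5 : t ^ k = (d * t) ^ k * (1 / d) ^ k := by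
        rw [← mul_pow]
        congr 1
        field_simp
      have h6 : (d * t) ^ k ≤ (Nat.factorial k : ℝ) * Real.exp (d * t) := by
        rw [div_le_iff₀ (by positivity : (0:ℝ) < (Nat.factorial k : ℝ))] at h2
        linarith
      calc t ^ k = (d * t) ^ k * (1 / d) ^ k := h5
      _ ≤ ((Nat.factorial k : ℝ) * Real.exp (d * t)) * (1 / d) ^ k :=
          mul_le_mul_of_nonneg_right h6 (by positivity)
      _ = (Nat.factorial k : ℝ) * (1 / d) ^ k * Real.exp (d * t) := by ring
    calc t ^ k * Real.exp (-(2 * d) * t)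
        ≤ ((Nat.factorial k : ℝ) * (1 / d) ^ k * Real.exp (d * t)) * Real.exp (-(2 * d) * t) :=
          mul_le_mul_of_nonneg_right h4 (Real.exp_pos _).le
    _ = (Nat.factorial k : ℝ) * (1 / d) ^ k * Real.exp (-d * t) := by
        rw [mul_assoc, ← Real.exp_add]
        congr 2
        ring
    _ ≤ ((Nat.factorial k : ℝ) * (1 / d) ^ k + 1) * Real.exp (-d * t) := by
        nlinarith [Real.exp_pos (-d * t)]

private lemma crse_part3 {κ : ℝ} (hκ : 0 < κ) {m : ℕ} (k : ℕ) :
    ∃ C : ℝ, 0 < C ∧ ∀ ξ : Euc m, ∀ l : ℂ, 0 ≤ l.re → ∀ xn : ℝ, 0 ≤ xn →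
      ‖iteratedFDeriv ℝ k (fun η : Euc m => Complex.exp (-(Apow κ 1 η l) * (xn : ℂ))) ξ‖ ≤
        C * (‖ξ‖ + ‖l‖ ^ ((1 : ℝ) / 2) + 1) ^ (-(k : ℝ)) *
          Real.exp (-(Real.sqrt (min 1 κ⁻¹) / 16) * (‖ξ‖ + ‖l‖ ^ ((1 : ℝ) / 2) + 1)
            * xn) := by
  have hκ' : (0 : ℝ) < κ⁻¹ := inv_pos.2 hκ
  set cκ : ℝ := Real.sqrt (min 1 κ⁻¹) / 8 with hcκdef
  have hcκ : 0 < cκ := by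
    rw [hcκdef]
    have : 0 < min 1 κ⁻¹ := lt_min one_pos hκ'
    positivity
  -- constants from part 1 with s = 1
  have h1 : ∀ i : ℕ, ∃ C : ℝ, 0 < C ∧ ∀ ξ : Euc m, ∀ l : ℂ, 0 ≤ l.re →
      ‖iteratedFDeriv ℝ i (fun η : Euc m => Apow κ 1 η l) ξ‖ ≤
        C * (‖ξ‖ + ‖l‖ ^ ((1 : ℝ) / 2) + 1) ^ (1 - (i : ℝ)) :=
    fun i => crse_part1 hκ 1 i
  choose C1 hC1pos hC1 using h1
  set Call : ℝ := 1 + ∑ i ∈ Finset.range (k + 1), |C1 i| with hCalldef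
  have hCall1 : (1 : ℝ) ≤ Call := by
    rw [hCalldef]
    have : (0:ℝ) ≤ ∑ i ∈ Finset.range (k + 1), |C1 i| :=
      Finset.sum_nonneg fun j _ => abs_nonneg _
    linarith
  have hCall0 : (0 : ℝ) < Call := lt_of_lt_of_le one_pos hCall1
  have hCalli : ∀ i ≤ k, C1 i ≤ Call := by
    intro i hi
    have h2 : |C1 i| ≤ ∑ j ∈ Finset.range (k + 1), |C1 j| :=
      Finset.single_le_sum (f := fun j => |C1 j|) (fun j _ => abs_nonneg _)
        (Finset.mem_range.2 (Nat.lt_succ_of_le hi))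
    have := le_abs_self (C1 i)
    rw [hCalldef]; linarith
  obtain ⟨B, hBpos, hB⟩ := crse_poly_exp k (d := cκ / 2) (by positivity)
  refine ⟨(Nat.factorial k : ℝ) * Call ^ k * B, by positivity, ?_⟩
  intro ξ l hl xn hxn
  set M : ℝ := ‖ξ‖ + ‖l‖ ^ ((1 : ℝ) / 2) + 1 with hMdef
  have hM1 : (1 : ℝ) ≤ M := by
    rw [hMdef]
    have h2 : (0:ℝ) ≤ ‖l‖ ^ ((1 : ℝ) / 2) := Real.rpow_nonneg (norm_nonneg l) _
    have h3 := norm_nonneg ξ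
    linarith
  have hM0 : (0 : ℝ) < M := lt_of_lt_of_le one_pos hM1
  have hl1re : 0 < (l + 1).re := by rw [Complex.add_re, Complex.one_re]; linarith
  -- smoothness of the A-slice
  have hAsm : ContDiff ℝ k (fun η : Euc m => Apow κ 1 η l) := by
    have := crse_slice_contDiff (m := m) hκ (1 / 2) (w := l + 1) hl1re k
    exact this
  set φ : Euc m → ℂ := fun η => -(Apow κ 1 η l) * (xn : ℂ) with hφdef
  have hφsm : ContDiff ℝ k φ := (hAsm.neg).mul contDiff_const
  have hcomp : (fun η : Euc m => Complex.exp (-(Apow κ 1 η l) * (xn : ℂ))) =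
      Complex.exp ∘ φ := rfl
  -- bound on inner derivatives
  set D : ℝ := Call * max 1 (xn * M) * M⁻¹ with hDdef
  have hmax1 : (1:ℝ) ≤ max 1 (xn * M) := le_max_left _ _
  have hD : ∀ i, 1 ≤ i → i ≤ k → ‖iteratedFDeriv ℝ i φ ξ‖ ≤ D ^ i := by
    intro i hi1 hik
    have hφeq : φ = ⇑(ContinuousLinearMap.mul ℝ ℂ (-(xn : ℂ))) ∘
        (fun η : Euc m => Apow κ 1 η l) := by
      funext η
      simp [hφdef, ContinuousLinearMap.mul_apply']
      ring
    rw [hφeq, (ContinuousLinearMap.mul ℝ ℂ (-(xn : ℂ))).iteratedFDeriv_comp_left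
      ((hAsm.of_le (by exact_mod_cast hik)).contDiffAt (x := ξ)) le_rfl]
    refine le_trans (ContinuousLinearMap.norm_compContinuousMultilinearMap_le _ _) ?_
    have hn1 : ‖ContinuousLinearMap.mul ℝ ℂ (-(xn : ℂ))‖ ≤ xn := by
      refine le_trans (ContinuousLinearMap.opNorm_mul_apply_le _ _ _) ?_
      rw [norm_neg, Complex.norm_real, Real.norm_eq_abs, _root_.abs_of_nonneg hxn]
    have hn2 := hC1 i ξ l hl
    have hstep : xn * (C1 i * M ^ (1 - (i : ℝ))) ≤ D ^ i := by
      have hMpow : M ^ (1 - (i : ℝ)) = M * (M⁻¹) ^ i := by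
        rw [sub_eq_add_neg, Real.rpow_add hM0, Real.rpow_one, Real.rpow_neg hM0.le,
          Real.rpow_natCast, ← inv_pow]
      rw [hMpow, hDdef]
      have hexp : (Call * max 1 (xn * M) * M⁻¹) ^ i =
          Call ^ i * max 1 (xn * M) ^ i * (M⁻¹) ^ i := by
        rw [mul_pow, mul_pow]
      rw [hexp]
      have hkey : xn * C1 i * M ≤ Call ^ i * max 1 (xn * M) ^ i := by
        have ha : xn * M ≤ max 1 (xn * M) ^ i := by
          calc xn * M ≤ max 1 (xn * M) := le_max_right _ _
          _ ≤ max 1 (xn * M) ^ i := le_self_pow₀ (le_max_left _ _) (by omega)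
        have hb : C1 i ≤ Call ^ i := by
          calc C1 i ≤ Call := hCalli i hik
          _ ≤ Call ^ i := le_self_pow₀ hCall1 (by omega)
        calc xn * C1 i * M = (xn * M) * C1 i := by ring
        _ ≤ (max 1 (xn * M) ^ i) * Call ^ i := by
            apply mul_le_mul ha hb (hC1pos i).le (by positivity)
        _ = Call ^ i * max 1 (xn * M) ^ i := by ring
      calc xn * (C1 i * (M * (M⁻¹) ^ i)) = (xn * C1 i * M) * (M⁻¹) ^ i := by ring
      _ ≤ (Call ^ i * max 1 (xn * M) ^ i) * (M⁻¹) ^ i :=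
          mul_le_mul_of_nonneg_right hkey (by positivity)
      _ = Call ^ i * max 1 (xn * M) ^ i * (M⁻¹) ^ i := by ring
    calc ‖ContinuousLinearMap.mul ℝ ℂ (-(xn : ℂ))‖ *
        ‖iteratedFDeriv ℝ i (fun η : Euc m => Apow κ 1 η l) ξ‖
        ≤ xn * (C1 i * M ^ (1 - (i : ℝ))) := by
          apply mul_le_mul hn1 hn2 (norm_nonneg _) hxn
    _ ≤ D ^ i := hstep
  -- bound on outer derivatives
  have hC : ∀ i, i ≤ k → ‖iteratedFDeriv ℝ i Complex.exp (φ ξ)‖ ≤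
      Real.exp (-(cκ * M) * xn) := by
    intro i _
    refine le_trans (crse_exp_bound i (φ ξ)) ?_
    apply Real.exp_le_exp.2
    have hre : (φ ξ).re = -((Apow κ 1 ξ l).re * xn) := by
      rw [hφdef]
      simp [Complex.mul_re, Complex.ofReal_re, Complex.ofReal_im]
    rw [hre]
    have := crse_reA hκ ξ hl
    rw [← hcκdef, ← hMdef] at this
    nlinarith
  have hcomp2 := norm_iteratedFDeriv_comp_le (𝕜 := ℝ) (g := Complex.exp) (f := φ)
    (n := k) (N := (k : WithTop ℕ∞)) (Complex.contDiff_exp (𝕜 := ℝ)) hφsm le_rfl ξ hC hD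
  rw [hcomp]
  refine le_trans hcomp2 ?_
  -- now: k! * exp(-(cκ M) xn) * D^k ≤ C * M^(-k) * exp(-(cκ/2) M xn)
  have hDk : D ^ k = Call ^ k * max 1 (xn * M) ^ k * (M⁻¹) ^ k := by
    rw [hDdef, mul_pow, mul_pow]
  have hpoly := hB (xn * M) (by positivity)
  have hMk : (M⁻¹) ^ k = M ^ (-(k : ℝ)) := by
    rw [Real.rpow_neg hM0.le, Real.rpow_natCast, inv_pow]
  have hexp1 : Real.exp (-(cκ * M) * xn) = Real.exp (-(2 * (cκ / 2)) * (xn * M)) := by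
    congr 1
    ring
  calc (Nat.factorial k : ℝ) * Real.exp (-(cκ * M) * xn) * D ^ k
      = (Nat.factorial k : ℝ) * Call ^ k * (M⁻¹) ^ k *
        (max 1 (xn * M) ^ k * Real.exp (-(2 * (cκ / 2)) * (xn * M))) := by
        rw [hDk, hexp1]
        ring
  _ ≤ (Nat.factorial k : ℝ) * Call ^ k * (M⁻¹) ^ k * (B * Real.exp (-(cκ / 2) * (xn * M))) := by
        apply mul_le_mul_of_nonneg_left hpoly (by positivity)
  _ = ((Nat.factorial k : ℝ) * Call ^ k * B) * M ^ (-(k : ℝ)) *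
        Real.exp (-(cκ / 2) * M * xn) := by
        rw [hMk]
        have : -(cκ / 2) * (xn * M) = -(cκ / 2) * M * xn := by ring
        rw [this]
        ring
  _ = ((Nat.factorial k : ℝ) * Call ^ k * B) * M ^ (-(k : ℝ)) *
        Real.exp (-(Real.sqrt (min 1 κ⁻¹) / 16) * M * xn) := by
        congr 3
        rw [hcκdef]
        ring

end CRSE

/-- Lemma 2.9: symbol estimates for the characteristic root
`A(ξ',λ) = (|ξ'|² + κ⁻¹(λ+1))^{1/2}`. -/
theorem characteristic_root_symbol_estimates
    (m : ℕ) (hm : 1 ≤ m) (κ : ℝ) (hκ : 0 < κ) :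
    ∃ d : ℝ, 0 < d ∧ ∀ (s : ℝ) (k : ℕ), ∃ C : ℝ, 0 < C ∧
      ∀ ξ : Euc m, ξ ≠ 0 → ∀ l : ℂ, 0 ≤ l.re → l.im ≠ 0 → ∀ xn : ℝ, 0 ≤ xn →
        (‖iteratedFDeriv ℝ k (fun η => Apow κ s η l) ξ‖ ≤
          C * (‖ξ‖ + ‖l‖ ^ ((1 : ℝ) / 2) + 1) ^ (s - k)) ∧
        (‖iteratedFDeriv ℝ k (fun η : Euc m => ‖η‖ ^ s) ξ‖ ≤ C * ‖ξ‖ ^ (s - k)) ∧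
        (‖iteratedFDeriv ℝ k (fun η => Complex.exp (-(Apow κ 1 η l) * (xn : ℂ))) ξ‖ ≤
          C * (‖ξ‖ + ‖l‖ ^ ((1 : ℝ) / 2) + 1) ^ (-(k : ℝ)) *
            Real.exp (-d * (‖ξ‖ + ‖l‖ ^ ((1 : ℝ) / 2) + 1) * xn)) := by
  have hmin : (0 : ℝ) < min 1 κ⁻¹ := lt_min one_pos (inv_pos.2 hκ)
  have hd0 : (0 : ℝ) < Real.sqrt (min 1 κ⁻¹) / 16 := by
    have := Real.sqrt_pos.2 hmin
    positivity
  refine ⟨Real.sqrt (min 1 κ⁻¹) / 16, hd0, ?_⟩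
  intro s k
  obtain ⟨C1, hC1pos, hC1⟩ := crse_part1 hκ (m := m) s k
  obtain ⟨C2, hC2pos, hC2⟩ := crse_part2 (m := m) s k
  obtain ⟨C3, hC3pos, hC3⟩ := crse_part3 hκ (m := m) k
  refine ⟨C1 + C2 + C3, by positivity, ?_⟩
  intro ξ hξ l hlre hlim xn hxn
  have hMnn : (0 : ℝ) ≤ ‖ξ‖ + ‖l‖ ^ ((1 : ℝ) / 2) + 1 := by positivity
  refine ⟨?_, ?_, ?_⟩
  · refine le_trans (hC1 ξ l hlre) ?_
    apply mul_le_mul_of_nonneg_right (by linarith) (Real.rpow_nonneg hMnn _)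
  · refine le_trans (hC2 ξ hξ) ?_
    apply mul_le_mul_of_nonneg_right (by linarith) (Real.rpow_nonneg (norm_nonneg ξ) _)
  · refine le_trans (hC3 ξ l hlre xn hxn) ?_
    have h1 : C3 * (‖ξ‖ + ‖l‖ ^ ((1 : ℝ) / 2) + 1) ^ (-(k : ℝ)) ≤
        (C1 + C2 + C3) * (‖ξ‖ + ‖l‖ ^ ((1 : ℝ) / 2) + 1) ^ (-(k : ℝ)) :=
      mul_le_mul_of_nonneg_right (by linarith) (Real.rpow_nonneg hMnn _)
    exact mul_le_mul_of_nonneg_right h1 (Real.exp_pos _).le
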